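/- Let n ≥ 2. The minimum of #Ap(Γₙ, x) over x ∈ {1, …, q^{n−1}} equals the minimum of the following numbers: q^{⌊n/2⌋}, q^{n−1}, and (q^k − 1) + q^{n−1−2k} for k ∈ {1, …, ⌊n/2⌋ − 1}. (This minimum is the second Feng–Rao number E(Γₙ, 2).) -/

import Mathlib

/-- A numerical semigroup: an additive submonoid of ℕ with finite complement. -/
def IsNumericalSemigroup (Γ : Set ℕ) : Prop :=
  0 ∈ Γ ∧ (∀ x ∈ Γ, ∀ y ∈ Γ, x + y ∈ Γ) ∧ Γᶜ.Finite

/-- The Apéry set Ap(Γ,x) = {s ∈ Γ : s - x ∉ Γ}. -/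
def Ap (Γ : Set ℕ) (x : ℕ) : Set ℕ := {s ∈ Γ | ∀ t ∈ Γ, s ≠ t + x}

/-- The conductor `cₙ` of the Garcia–Stichtenoth tower semigroups:
`cₙ = qⁿ - q^((n+1)/2)` if `n` is odd, `cₙ = qⁿ - q^(n/2)` if `n` is even. -/
def cGS (q n : ℕ) : ℕ := if n % 2 = 1 then q ^ n - q ^ ((n + 1) / 2) else q ^ n - q ^ (n / 2)

/-- The Weierstrass semigroups of the Garcia–Stichtenoth tower:
Γ₁ = ℕ and Γₙ = q·Γ_{n-1} ∪ (cₙ + ℕ) for n ≥ 2. -/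
def GST (q : ℕ) : ℕ → Set ℕ
  | 0 => Set.univ
  | 1 => Set.univ
  | n + 2 => (fun x => q * x) '' GST q (n + 1) ∪ {x | cGS q (n + 2) ≤ x}

lemma cGS_eq (q m : ℕ) : cGS q m = q ^ m - q ^ ((m + 1) / 2) := by
  unfold cGS
  rcases Nat.even_or_odd m with h | h
  · obtain ⟨k, rfl⟩ := h
    have h1 : (k + k) % 2 = 0 := by omega
    have h2 : (k + k + 1) / 2 = (k + k) / 2 := by omega
    simp [h1, h2]
  · obtain ⟨k, rfl⟩ := h
    have h1 : (2 * k + 1) % 2 = 1 := by omega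
    simp [h1]

theorem mem_GST (q : ℕ) (hq : 2 ≤ q) :
    ∀ n, 1 ≤ n → ∀ s : ℕ,
      (s ∈ GST q n ↔ ∃ j, j < n ∧ q ^ j ∣ s ∧ q ^ n ≤ s + q ^ ((n + j + 1) / 2))
  | 0, h => by omega
  | 1, _ => by
    intro s
    constructor
    · intro _
      exact ⟨0, by omega, one_dvd _, by simpa using Nat.le_add_left _ _⟩
    · intro _
      simp [GST]
  | (n + 2), _ => by
    intro s
    have IH := mem_GST q hq (n + 1) (by omega)
    constructor
    · intro hs
      rcases hs with ⟨s', hs', rfl⟩ | h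
      · obtain ⟨j, hj, hdvd, hle⟩ := (IH s').mp hs'
        refine ⟨j + 1, by omega, ?_, ?_⟩
        · rw [pow_succ']
          exact mul_dvd_mul_left q hdvd
        · have hexp : (n + 2 + (j + 1) + 1) / 2 = (n + 1 + j + 1) / 2 + 1 := by omega
          rw [hexp]
          calc q ^ (n + 2) = q * q ^ (n + 1) := by ring
            _ ≤ q * (s' + q ^ ((n + 1 + j + 1) / 2)) := Nat.mul_le_mul_left q hle
            _ = q * s' + q ^ ((n + 1 + j + 1) / 2 + 1) := by ring
      · refine ⟨0, by omega, one_dvd _, ?_⟩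
        have h' : cGS q (n+2) ≤ s := h
        rw [cGS_eq] at h'
        have hexp : (n + 2 + 0 + 1) / 2 = (n + 2 + 1) / 2 := by omega
        have hle : q ^ ((n + 2 + 1) / 2) ≤ q ^ (n + 2) :=
          Nat.pow_le_pow_right (by omega) (by omega)
        rw [hexp]
        omega
    · rintro ⟨j, hj, hdvd, hle⟩
      match j, hj with
      | 0, _ =>
        right
        show cGS q (n+2) ≤ s
        rw [cGS_eq]
        have hexp : (n + 2 + 0 + 1) / 2 = (n + 2 + 1) / 2 := by omega
        rw [hexp] at hle
        have hle2 : q ^ ((n + 2 + 1) / 2) ≤ q ^ (n + 2) :=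
          Nat.pow_le_pow_right (by omega) (by omega)
        omega
      | (j' + 1), hj =>
        left
        have hqdvd : q ∣ s := dvd_trans (dvd_pow_self q (by omega : j' + 1 ≠ 0)) hdvd
        obtain ⟨s', rfl⟩ := hqdvd
        refine ⟨s', ?_, rfl⟩
        rw [IH s']
        refine ⟨j', by omega, ?_, ?_⟩
        · have := hdvd
          rw [pow_succ'] at this
          exact (mul_dvd_mul_iff_left (by omega : q ≠ 0)).mp this
        · have hexp : (n + 2 + (j' + 1) + 1) / 2 = (n + 1 + j' + 1) / 2 + 1 := by omega
          rw [hexp] at hle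
          have : q * q ^ (n + 1) ≤ q * (s' + q ^ ((n + 1 + j' + 1) / 2)) := by
            calc q * q ^ (n+1) = q ^ (n+2) := by ring
              _ ≤ q * s' + q ^ ((n + 1 + j' + 1) / 2 + 1) := hle
              _ = q * (s' + q ^ ((n + 1 + j' + 1) / 2)) := by ring
          exact Nat.le_of_mul_le_mul_left this (by omega)

lemma zero_mem_GST (q : ℕ) (hq : 2 ≤ q) (n : ℕ) (hn : 1 ≤ n) : 0 ∈ GST q n := by
  rw [mem_GST q hq n hn]
  refine ⟨n - 1, by omega, dvd_zero _, ?_⟩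
  have : (n + (n - 1) + 1) / 2 = n := by omega
  rw [this]
  omega

lemma conductor_mem_GST (q : ℕ) (hq : 2 ≤ q) (n : ℕ) (hn : 1 ≤ n) {s : ℕ}
    (hs : q ^ n ≤ s) : s ∈ GST q n := by
  rw [mem_GST q hq n hn]
  exact ⟨0, by omega, one_dvd _, le_trans hs (Nat.le_add_right _ _)⟩

lemma add_mem_GST (q : ℕ) (hq : 2 ≤ q) (n : ℕ) (hn : 1 ≤ n) {a b : ℕ}
    (ha : a ∈ GST q n) (hb : b ∈ GST q n) : a + b ∈ GST q n := by
  rw [mem_GST q hq n hn] at ha hb ⊢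
  obtain ⟨j1, hj1, hd1, hl1⟩ := ha
  obtain ⟨j2, hj2, hd2, hl2⟩ := hb
  rcases le_total j1 j2 with h | h
  · exact ⟨j1, hj1, dvd_add hd1 (dvd_trans (pow_dvd_pow q h) hd2), by omega⟩
  · refine ⟨j2, hj2, dvd_add (dvd_trans (pow_dvd_pow q h) hd1) hd2, by omega⟩

open scoped Classical in
noncomputable def Ecount (q n x : ℕ) : ℕ :=
  ((Finset.range (q ^ n)).filter (fun s => s ∈ GST q n ∧ s + x ∉ GST q n)).card

open Finset in
open scoped Classical in
lemma ncard_Ap (q : ℕ) (hq : 2 ≤ q) (n : ℕ) (hn : 1 ≤ n) (x : ℕ) :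
    (Ap (GST q n) x).ncard = x + Ecount q n x := by
  set N := q ^ n with hN
  set Γ := GST q n with hΓ
  have hcond : ∀ {u : ℕ}, N ≤ u → u ∈ Γ := fun {u} hu => conductor_mem_GST q hq n hn hu
  set A : Finset ℕ := (range (N + x)).filter (fun s => s ∈ Ap Γ x) with hA
  set G0 : Finset ℕ := (range N).filter (fun s => s ∈ Γ) with hG0
  set G1 : Finset ℕ := (range (N + x)).filter (fun s => s ∈ Γ) with hG1
  -- Ap = ↑A
  have hApA : Ap Γ x = ↑A := by
    ext s
    simp only [hA, coe_filter, mem_range, Set.mem_setOf_eq]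
    constructor
    · intro hs
      refine ⟨?_, hs⟩
      by_contra hlt
      push_neg at hlt
      have hxs : x ≤ s := by
        have h1 : 1 ≤ q ^ n := Nat.one_le_pow _ _ (by omega)
        omega
      have hmem : s - x ∈ Γ := hcond (by omega)
      exact hs.2 (s - x) hmem (by omega)
    · exact fun h => h.2
  rw [hApA, Set.ncard_coe_finset]
  -- A = G1 \ (G0.image (· + x))
  have hAeq : A = G1 \ (G0.image (· + x)) := by
    ext s
    simp only [hA, hG1, hG0, mem_sdiff, mem_filter, mem_range, mem_image, Ap,
      Set.mem_setOf_eq]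
    constructor
    · rintro ⟨hsr, hsΓ, hall⟩
      exact ⟨⟨hsr, hsΓ⟩, by rintro ⟨t, ⟨htr, htΓ⟩, rfl⟩; exact hall t htΓ rfl⟩
    · rintro ⟨⟨hsr, hsΓ⟩, hnot⟩
      refine ⟨hsr, hsΓ, fun t htΓ hst => hnot ⟨t, ⟨by omega, htΓ⟩, hst.symm⟩⟩
  -- G1.card = G0.card + x
  have hG1card : G1.card = G0.card + x := by
    have : G1 = G0 ∪ Ico N (N + x) := by
      ext u
      simp only [hG1, hG0, mem_union, mem_filter, mem_range, mem_Ico]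
      constructor
      · rintro ⟨hur, huΓ⟩
        rcases lt_or_ge u N with h | h
        · exact Or.inl ⟨h, huΓ⟩
        · exact Or.inr ⟨h, hur⟩
      · rintro (⟨hur, huΓ⟩ | ⟨h1, h2⟩)
        · exact ⟨by omega, huΓ⟩
        · exact ⟨h2, hcond h1⟩
    rw [this, card_union_of_disjoint, Nat.card_Ico]
    · omega
    · simp only [disjoint_left, hG0, mem_filter, mem_range, mem_Ico]
      rintro u ⟨hur, _⟩ ⟨h1, _⟩
      omega
  -- image card
  have himcard : (G0.image (· + x)).card = G0.card :=
    card_image_of_injective _ (add_left_injective x)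
  -- intersection
  have hintereq : G1 ∩ (G0.image (· + x)) = (G0.filter (fun s => s + x ∈ Γ)).image (· + x) := by
    ext u
    simp only [mem_inter, mem_image, mem_filter, hG1, hG0, mem_range]
    constructor
    · rintro ⟨⟨hur, huΓ⟩, t, ⟨htr, htΓ⟩, rfl⟩
      exact ⟨t, ⟨⟨htr, htΓ⟩, huΓ⟩, rfl⟩
    · rintro ⟨t, ⟨⟨htr, htΓ⟩, htxΓ⟩, rfl⟩
      exact ⟨⟨by omega, htxΓ⟩, t, ⟨htr, htΓ⟩, rfl⟩
  have hintercard : (G1 ∩ (G0.image (· + x))).card = (G0.filter (fun s => s + x ∈ Γ)).card := by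
    rw [hintereq]
    exact card_image_of_injective _ (add_left_injective x)
  -- filter split
  have hsplit : (G0.filter (fun s => s + x ∈ Γ)).card + Ecount q n x = G0.card := by
    have h1 : ((Finset.range N).filter (fun s => s ∈ Γ ∧ s + x ∉ Γ)) =
        G0.filter (fun s => ¬ (s + x ∈ Γ)) := by
      rw [hG0, filter_filter]
    have h2 := card_filter_add_card_filter_not (s := G0) (p := fun s => s + x ∈ Γ)
    unfold Ecount
    rw [h1]
    convert h2 using 2
  have hsdiff : A.card + (G1 ∩ (G0.image (· + x))).card = G1.card := by
    rw [hAeq]; exact card_sdiff_add_card_inter _ _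
  omega

-- Witness construction for the lower bound
lemma witness_facts (q : ℕ) (hq : 2 ≤ q) (n : ℕ) (hn : 2 ≤ n) {x b i m : ℕ}
    (hxb : q ^ b ≤ x) (hxb' : x < q ^ (b + 1)) (hbn : b + 2 ≤ n)
    (hi : 1 ≤ i) (hiK : i ≤ (n - b) / 2)
    (hm1 : q ^ (i - 1) < m) (hm2 : m ≤ q ^ i) :
    q ^ (n - i) < m * q ^ (n + 1 - 2 * i) ∧ m * q ^ (n + 1 - 2 * i) ≤ q ^ (n + 1 - i) ∧
    (q ^ n - m * q ^ (n + 1 - 2 * i)) ∈ GST q n ∧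
    q ^ n - m * q ^ (n + 1 - 2 * i) < q ^ n ∧
    (q ^ n - m * q ^ (n + 1 - 2 * i)) + x ∉ GST q n := by
  have h2i : 2 * i ≤ n - b := by omega
  have hbn' : b ≤ n := by omega
  set e := n + 1 - 2 * i with he
  set t := m * q ^ e with ht
  set K := (n - b) / 2 with hK
  -- basic power facts
  have hpow_pos : ∀ a : ℕ, 0 < q ^ a := fun a => Nat.pow_pos (by omega)
  have ht_up : t ≤ q ^ (n + 1 - i) := by
    calc t ≤ q ^ i * q ^ e := Nat.mul_le_mul_right _ hm2
      _ = q ^ (n + 1 - i) := by rw [← pow_add]; congr 1; omega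
  have ht_lo : q ^ (n - i) + q ^ e ≤ t := by
    calc q ^ (n - i) + q ^ e = (q ^ (i - 1) + 1) * q ^ e := by
          rw [add_mul, one_mul, ← pow_add]; congr 2; omega
      _ ≤ t := Nat.mul_le_mul_right _ (by omega)
  have ht_lt : q ^ (n - i) < t := by have := hpow_pos e; omega
  have ht_leN : t ≤ q ^ n := le_trans ht_up (Nat.pow_le_pow_right (by omega) (by omega))
  have hx_lt_e : x < q ^ e := lt_of_lt_of_le hxb' (Nat.pow_le_pow_right (by omega) (by omega))
  have hx_lt_t : x < t := by have := ht_lo; omega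
  set s := q ^ n - t with hs
  have hst : s + t = q ^ n := by omega
  refine ⟨ht_lt, ht_up, ?_, by have := hpow_pos (n - i); omega, ?_⟩
  · -- s ∈ GST
    rw [mem_GST q hq n (by omega)]
    refine ⟨e, by omega, ?_, ?_⟩
    · exact Nat.dvd_sub (pow_dvd_pow q (by omega)) (Dvd.intro_left m ht.symm)
    · have hexp : (n + e + 1) / 2 = n + 1 - i := by omega
      rw [hexp]
      omega
  · -- s + x ∉ GST
    intro hmem
    rw [mem_GST q hq n (by omega)] at hmem
    obtain ⟨j', hj', hdvd', hle'⟩ := hmem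
    set u := t - x with hu
    have hu_pos : 0 < u := by omega
    have hsxu : (s + x) + u = q ^ n := by omega
    have hdvd_u : q ^ j' ∣ u := by
      have h1 : q ^ j' ∣ q ^ n := pow_dvd_pow q (by omega)
      have h2 : u = q ^ n - (s + x) := by omega
      rw [h2]
      exact Nat.dvd_sub h1 hdvd'
    have hu_le : u ≤ q ^ ((n + j' + 1) / 2) := by omega
    have hu_big : q ^ (n - K) < u := by
      have h1 : q ^ (n - K) ≤ q ^ (n - i) := Nat.pow_le_pow_right (by omega) (by omega)
      omega
    rcases le_or_gt j' b with hcase | hcase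
    · -- small j' : contradiction with u big
      have h1 : q ^ ((n + j' + 1) / 2) ≤ q ^ (n - K) :=
        Nat.pow_le_pow_right (by omega) (by omega)
      omega
    · -- big j' : q^(b+1) divides x, contradiction
      have hd1 : q ^ (b + 1) ∣ u := dvd_trans (pow_dvd_pow q (by omega)) hdvd_u
      have hd2 : q ^ (b + 1) ∣ t := dvd_trans (pow_dvd_pow q (by omega : b + 1 ≤ e))
        (Dvd.intro_left m ht.symm)
      have hd3 : q ^ (b + 1) ∣ x := by
        have hxeq : x = t - u := by omega
        rw [hxeq]
        exact Nat.dvd_sub hd2 hd1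
      have := Nat.le_of_dvd (by have := hpow_pos b; omega) hd3
      omega

open Finset in
open scoped Classical in
lemma Ecount_lower (q : ℕ) (hq : 2 ≤ q) (n : ℕ) (hn : 2 ≤ n) {x b : ℕ}
    (hxb : q ^ b ≤ x) (hxb' : x < q ^ (b + 1)) (hbn : b ≤ n - 1) :
    q ^ ((n - b) / 2) - 1 ≤ Ecount q n x := by
  set K := (n - b) / 2 with hK
  rcases Nat.eq_zero_or_pos K with hK0 | hKpos
  · simp [hK0]
  have hbn2 : b + 2 ≤ n := by omega
  set f : ℕ → ℕ := fun m => q ^ n - m * q ^ (n + 1 - 2 * Nat.clog q m) with hf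
  have key : ∀ m ∈ Finset.Ioc 1 (q ^ K), 1 ≤ Nat.clog q m ∧ Nat.clog q m ≤ K ∧
      q ^ (Nat.clog q m - 1) < m ∧ m ≤ q ^ (Nat.clog q m) := by
    intro m hm
    rw [Finset.mem_Ioc] at hm
    have h1 : 1 ≤ Nat.clog q m := Nat.clog_pos (by omega) (by omega)
    have h2 : Nat.clog q m ≤ K := by
      have := Nat.clog_mono_right q hm.2
      rwa [Nat.clog_pow q K (by omega)] at this
    have h3 : q ^ (Nat.clog q m - 1) < m := Nat.pow_pred_clog_lt_self (by omega) (by omega)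
    have h4 : m ≤ q ^ (Nat.clog q m) := Nat.le_pow_clog (by omega) m
    exact ⟨h1, h2, h3, h4⟩
  have hmaps : ∀ m ∈ Finset.Ioc 1 (q ^ K),
      f m ∈ (Finset.range (q ^ n)).filter (fun s => s ∈ GST q n ∧ s + x ∉ GST q n) := by
    intro m hm
    obtain ⟨h1, h2, h3, h4⟩ := key m hm
    obtain ⟨_, _, hmem, hlt, hnmem⟩ :=
      witness_facts q hq n hn hxb hxb' hbn2 h1 h2 h3 h4
    rw [Finset.mem_filter, Finset.mem_range]
    exact ⟨hlt, hmem, hnmem⟩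
  have hinj : ∀ m₁ ∈ Finset.Ioc 1 (q ^ K), ∀ m₂ ∈ Finset.Ioc 1 (q ^ K),
      f m₁ = f m₂ → m₁ = m₂ := by
    intro m₁ hm₁ m₂ hm₂ heq
    obtain ⟨h11, h12, h13, h14⟩ := key m₁ hm₁
    obtain ⟨h21, h22, h23, h24⟩ := key m₂ hm₂
    obtain ⟨hlt1, hup1, _, _, _⟩ := witness_facts q hq n hn hxb hxb' hbn2 h11 h12 h13 h14
    obtain ⟨hlt2, hup2, _, _, _⟩ := witness_facts q hq n hn hxb hxb' hbn2 h21 h22 h23 h24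
    set i₁ := Nat.clog q m₁ with hi₁
    set i₂ := Nat.clog q m₂ with hi₂
    have hN1 : m₁ * q ^ (n + 1 - 2 * i₁) ≤ q ^ n :=
      le_trans hup1 (Nat.pow_le_pow_right (by omega) (by omega))
    have hN2 : m₂ * q ^ (n + 1 - 2 * i₂) ≤ q ^ n :=
      le_trans hup2 (Nat.pow_le_pow_right (by omega) (by omega))
    have hteq : m₁ * q ^ (n + 1 - 2 * i₁) = m₂ * q ^ (n + 1 - 2 * i₂) := by
      simp only [hf, ← hi₁, ← hi₂] at heq
      omega
    rcases lt_trichotomy i₁ i₂ with hlt | heqi | hgt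
    · exfalso
      have : q ^ (n + 1 - i₂) ≤ q ^ (n - i₁) := Nat.pow_le_pow_right (by omega) (by omega)
      omega
    · rw [heqi] at hteq
      exact Nat.eq_of_mul_eq_mul_right (Nat.pow_pos (by omega)) hteq
    · exfalso
      have : q ^ (n + 1 - i₁) ≤ q ^ (n - i₂) := Nat.pow_le_pow_right (by omega) (by omega)
      omega
  have hcard := Finset.card_le_card_of_injOn f hmaps hinj
  rw [Nat.card_Ioc] at hcard
  exact le_trans (le_of_eq rfl) (le_trans (by omega) hcard)

open Finset in
open scoped Classical in
lemma Ecount_upper (q : ℕ) (hq : 2 ≤ q) (n : ℕ) (hn : 2 ≤ n) {j : ℕ} (hj : j ≤ n - 1) :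
    Ecount q n (q ^ j) ≤ q ^ ((n - j) / 2) - 1 := by
  have hpow_pos : ∀ a : ℕ, 0 < q ^ a := fun a => Nat.pow_pos (by omega)
  rcases eq_or_lt_of_le hj with hj1 | hj2
  · -- j = n - 1 : Ecount = 0
    have hqj : q ^ j ∈ GST q n := by
      rw [mem_GST q hq n (by omega)]
      refine ⟨n - 1, by omega, by rw [hj1], ?_⟩
      have : (n + (n - 1) + 1) / 2 = n := by omega
      rw [this]
      omega
    have : Ecount q n (q ^ j) = 0 := by
      unfold Ecount
      rw [Finset.card_eq_zero, Finset.filter_eq_empty_iff]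
      rintro s hs ⟨hsΓ, hnot⟩
      exact hnot (add_mem_GST q hq n (by omega) hsΓ hqj)
    omega
  · -- j ≤ n - 2
    have hjn : j + 2 ≤ n := by omega
    set K := (n - j) / 2 with hK
    have hK1 : 1 ≤ K := by omega
    have hKn : K + 1 ≤ n := by omega
    set f : ℕ → ℕ := fun m => q ^ n - m * q ^ (n + 1 - 2 * Nat.clog q m) with hf
    have hsub : (Finset.range (q ^ n)).filter
        (fun s => s ∈ GST q n ∧ s + q ^ j ∉ GST q n) ⊆ (Finset.Ioc 1 (q ^ K)).image f := by
      intro s hs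
      rw [Finset.mem_filter, Finset.mem_range] at hs
      obtain ⟨hsN, hsΓ, hsx⟩ := hs
      obtain ⟨j₁, hj₁n, hdvd₁, hle₁⟩ := (mem_GST q hq n (by omega) s).mp hsΓ
      set t := q ^ n - s with ht
      have hst : s + t = q ^ n := by omega
      have ht_up : t ≤ q ^ ((n + j₁ + 1) / 2) := by omega
      have hdvd_t : q ^ j₁ ∣ t := by
        have : t = q ^ n - s := ht
        rw [this]
        exact Nat.dvd_sub (pow_dvd_pow q (by omega)) hdvd₁
      -- s + q^j < q^n
      have hlt_N : s + q ^ j < q ^ n := by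
        by_contra hge
        exact hsx (conductor_mem_GST q hq n (by omega) (by omega))
      have htj : q ^ j < t := by omega
      set u := t - q ^ j with hu
      -- j < j₁
      have hj₁j : j < j₁ := by
        by_contra hle
        push_neg at hle
        apply hsx
        rw [mem_GST q hq n (by omega)]
        refine ⟨j₁, hj₁n, dvd_add hdvd₁ (pow_dvd_pow q hle), by omega⟩
      have hdvd_tj : q ^ (j + 1) ∣ t := dvd_trans (pow_dvd_pow q (by omega)) hdvd_t
      -- gap condition at level j
      have hu_gap : q ^ ((n + j + 1) / 2) < u := by
        rw [mem_GST q hq n (by omega)] at hsx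
        push_neg at hsx
        have h1 := hsx j (by omega) (dvd_add (dvd_trans (pow_dvd_pow q (by omega)) hdvd₁)
          dvd_rfl)
        omega
      have hnK : (n + j + 1) / 2 = n - K := by omega
      rw [hnK] at hu_gap
      have ht_big : q ^ (n - K) < t := by omega
      -- clog bounds
      have ht2 : 2 ≤ t := by
        have h1 : q ^ 1 ≤ q ^ (n - K) := Nat.pow_le_pow_right (by omega) (by omega)
        have h2 : q ^ 1 = q := pow_one q
        omega
      set c := Nat.clog q t with hc
      have hc_up : c ≤ n := by
        have h1 : t ≤ q ^ n := by omega
        have := Nat.clog_mono_right q h1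
        rwa [Nat.clog_pow q n (by omega)] at this
      have hc_lo : n - K < c := by
        rw [hc, Nat.lt_clog_iff_pow_lt (by omega)]
        exact ht_big
      have ht_le_c : t ≤ q ^ c := Nat.le_pow_clog (by omega) t
      have ht_gt_c : q ^ (c - 1) < t := Nat.pow_pred_clog_lt_self (by omega) (by omega)
      set i := n + 1 - c with hi
      have hi1 : 1 ≤ i := by omega
      have hiK : i ≤ K := by omega
      have h2i : 2 * i ≤ n := by omega
      have hci : c = n + 1 - i := by omega
      have hci' : c - 1 = n - i := by omega
      rw [hci] at ht_le_c
      rw [hci'] at ht_gt_c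
      have hsplit1 : q ^ (n + 1 - i) = q ^ i * q ^ (n + 1 - 2 * i) := by
        rw [← pow_add]; congr 1; omega
      have hsplit2 : q ^ (n - i) = q ^ (i - 1) * q ^ (n + 1 - 2 * i) := by
        rw [← pow_add]; congr 1; omega
      -- q^(n+1-2i) divides t
      have hj₁_big : n + 1 - 2 * i ≤ j₁ := by
        have h1 : q ^ (n - i) < q ^ ((n + j₁ + 1) / 2) := by omega
        have h2 : n - i < (n + j₁ + 1) / 2 := by
          by_contra hcon
          push_neg at hcon
          have := Nat.pow_le_pow_right (show 1 ≤ q by omega) hcon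
          omega
        omega
      have hdvd_e : q ^ (n + 1 - 2 * i) ∣ t := dvd_trans (pow_dvd_pow q hj₁_big) hdvd_t
      set m := t / q ^ (n + 1 - 2 * i) with hm
      have hm_eq : m * q ^ (n + 1 - 2 * i) = t := Nat.div_mul_cancel hdvd_e
      -- m bounds
      have hm_up : m ≤ q ^ i := by
        refine Nat.le_of_mul_le_mul_right ?_ (hpow_pos (n + 1 - 2 * i))
        rw [hm_eq, ← hsplit1]
        exact ht_le_c
      have hm_lo : q ^ (i - 1) < m := by
        refine lt_of_mul_lt_mul_right ?_ (Nat.zero_le (q ^ (n + 1 - 2 * i)))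
        rw [hm_eq, ← hsplit2]
        exact ht_gt_c
      have hclog_m : Nat.clog q m = i := by
        have h1 : Nat.clog q m ≤ i := by
          rw [Nat.clog_le_iff_le_pow (by omega)]
          exact hm_up
        have h2 : i - 1 < Nat.clog q m := by
          rw [Nat.lt_clog_iff_pow_lt (by omega)]
          exact hm_lo
        omega
      rw [Finset.mem_image]
      refine ⟨m, ?_, ?_⟩
      · rw [Finset.mem_Ioc]
        constructor
        · have h1 : 1 ≤ q ^ (i - 1) := hpow_pos _
          omega
        · exact le_trans hm_up (Nat.pow_le_pow_right (by omega) hiK)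
      · rw [hf]
        simp only
        rw [hclog_m, hm_eq]
        omega
    calc Ecount q n (q ^ j) ≤ ((Finset.Ioc 1 (q ^ K)).image f).card := Finset.card_le_card hsub
      _ ≤ (Finset.Ioc 1 (q ^ K)).card := Finset.card_image_le
      _ = q ^ K - 1 := by rw [Nat.card_Ioc]

lemma ncard_Ap_pow (q : ℕ) (hq : 2 ≤ q) (n : ℕ) (hn : 2 ≤ n) {j : ℕ} (hj : j ≤ n - 1) :
    (Ap (GST q n) (q ^ j)).ncard = q ^ j + (q ^ ((n - j) / 2) - 1) := by
  rw [ncard_Ap q hq n (by omega)]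
  congr 1
  have h1 := Ecount_upper q hq n hn hj
  have h2 := Ecount_lower q hq n hn (le_refl (q ^ j))
    (Nat.pow_lt_pow_right (by omega) (by omega)) hj
  omega

lemma ncard_Ap_ge (q : ℕ) (hq : 2 ≤ q) (n : ℕ) (hn : 2 ≤ n) {x : ℕ}
    (hx1 : 1 ≤ x) (hx2 : x ≤ q ^ (n - 1)) :
    ∃ j, j ≤ n - 1 ∧ q ^ j + (q ^ ((n - j) / 2) - 1) ≤ (Ap (GST q n) x).ncard := by
  set b := Nat.log q x with hb
  have hxb : q ^ b ≤ x := Nat.pow_log_le_self q (by omega)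
  have hxb' : x < q ^ (b + 1) := Nat.lt_pow_succ_log_self (by omega) x
  have hbn : b ≤ n - 1 := by
    by_contra hcon
    push_neg at hcon
    have h1 : q ^ (n - 1) < q ^ b := Nat.pow_lt_pow_right (by omega) hcon
    omega
  refine ⟨b, hbn, ?_⟩
  rw [ncard_Ap q hq n (by omega)]
  have h2 := Ecount_lower q hq n hn hxb hxb' hbn
  omega

/-- The minimum of #Ap(Γₙ,x) over 1 ≤ x ≤ q^(n-1) (the second Feng–Rao number
E(Γₙ,2)) equals the minimum of q^⌊n/2⌋, q^(n-1), and (q^k - 1) + q^(n-1-2k)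
for 1 ≤ k ≤ ⌊n/2⌋ - 1. -/
theorem stmt14 (q : ℕ) (hq : 2 ≤ q) (n : ℕ) (hn : 2 ≤ n) :
    sInf {v | ∃ x, 1 ≤ x ∧ x ≤ q ^ (n - 1) ∧ v = (Ap (GST q n) x).ncard}
      = sInf ({q ^ (n / 2), q ^ (n - 1)}
          ∪ {v | ∃ k, 1 ≤ k ∧ k ≤ n / 2 - 1 ∧ v = (q ^ k - 1) + q ^ (n - 1 - 2 * k)}) := by
  have hpow_pos : ∀ a : ℕ, 0 < q ^ a := fun a => Nat.pow_pos (by omega)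
  set S : Set ℕ := {v | ∃ x, 1 ≤ x ∧ x ≤ q ^ (n - 1) ∧ v = (Ap (GST q n) x).ncard} with hS
  set R : Set ℕ := ({q ^ (n / 2), q ^ (n - 1)}
      ∪ {v | ∃ k, 1 ≤ k ∧ k ≤ n / 2 - 1 ∧ v = (q ^ k - 1) + q ^ (n - 1 - 2 * k)}) with hR
  -- the g values are in S
  have hg_mem : ∀ j, j ≤ n - 1 → (q ^ j + (q ^ ((n - j) / 2) - 1)) ∈ S := by
    intro j hj
    exact ⟨q ^ j, hpow_pos j, Nat.pow_le_pow_right (by omega) hj,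
      (ncard_Ap_pow q hq n hn hj).symm⟩
  -- R elements are g values
  have hR_g : ∀ w ∈ R, ∃ j, j ≤ n - 1 ∧ w = q ^ j + (q ^ ((n - j) / 2) - 1) := by
    intro w hw
    rw [hR] at hw
    rcases hw with (hw | hw) | ⟨k, hk1, hk2, hw⟩
    · -- w = q^(n/2), j = 0
      refine ⟨0, by omega, ?_⟩
      have he : (n - 0) / 2 = n / 2 := by omega
      rw [hw, he]
      have := hpow_pos (n / 2)
      simp only [pow_zero]
      omega
    · -- w = q^(n-1), j = n-1
      rw [Set.mem_singleton_iff] at hw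
      refine ⟨n - 1, le_refl _, ?_⟩
      have he : (n - (n - 1)) / 2 = 0 := by omega
      rw [hw, he]
      simp
    · -- k element
      refine ⟨n - 1 - 2 * k, by omega, ?_⟩
      have he : (n - (n - 1 - 2 * k)) / 2 = k := by omega
      rw [hw, he]
      have := hpow_pos k
      omega
  -- every g value dominates some R element
  have hg_R : ∀ j, j ≤ n - 1 → ∃ w ∈ R, w ≤ q ^ j + (q ^ ((n - j) / 2) - 1) := by
    intro j hj
    set d := n - 1 - j with hd
    rcases Nat.even_or_odd d with ⟨k, hk⟩ | ⟨k, hk⟩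
    · -- d = 2k, j = n-1-2k, value = q^j + q^k - 1
      have he : (n - j) / 2 = k := by omega
      rw [he]
      rcases Nat.eq_zero_or_pos k with hk0 | hkpos
      · -- k = 0 : w = q^(n-1)
        refine ⟨q ^ (n - 1), by rw [hR]; left; right; rfl, ?_⟩
        have hj' : j = n - 1 := by omega
        rw [hj', hk0]
        simp
      · rcases le_or_gt k (n / 2 - 1) with hkle | hkgt
        · -- regular k element
          refine ⟨(q ^ k - 1) + q ^ (n - 1 - 2 * k), ?_, ?_⟩
          · rw [hR]; right; exact ⟨k, hkpos, hkle, rfl⟩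
          · have hj' : j = n - 1 - 2 * k := by omega
            rw [hj']
            have := hpow_pos k
            omega
        · -- k = n/2 (n odd, j = 0) : w = q^(n/2)
          have hj0 : j = 0 := by omega
          have hkn : k = n / 2 := by omega
          refine ⟨q ^ (n / 2), by rw [hR]; left; left; rfl, ?_⟩
          rw [hj0, hkn]
          have := hpow_pos (n / 2)
          simp only [pow_zero]
          omega
    · -- d = 2k+1, j = n-2-2k, value = q^j + q^(k+1) - 1
      have he : (n - j) / 2 = k + 1 := by omega
      rw [he]
      rcases le_or_gt (k + 1) (n / 2 - 1) with hkle | hkgt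
      · -- w = (k+1) element
        refine ⟨(q ^ (k + 1) - 1) + q ^ (n - 1 - 2 * (k + 1)), ?_, ?_⟩
        · rw [hR]; right; exact ⟨k + 1, by omega, hkle, rfl⟩
        · have h1 : q ^ (n - 1 - 2 * (k + 1)) ≤ q ^ j :=
            Nat.pow_le_pow_right (by omega) (by omega)
          have := hpow_pos (k + 1)
          omega
      · -- k+1 ≥ n/2 : two boundary cases
        refine ⟨q ^ (n / 2), by rw [hR]; left; left; rfl, ?_⟩
        have hcase : 2 * k + 2 = n ∨ 2 * k + 2 = n - 1 := by omega
        rcases hcase with hc | hc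
        · -- n even, j = 0
          have hj0 : j = 0 := by omega
          have hkn : k + 1 = n / 2 := by omega
          rw [hj0, hkn]
          have := hpow_pos (n / 2)
          simp only [pow_zero]
          omega
        · -- n odd, j = 1
          have hj1 : j = 1 := by omega
          have hkn : k + 1 = n / 2 := by omega
          rw [hj1, hkn]
          have := hpow_pos (n / 2)
          have hq1 : q ^ 1 = q := pow_one q
          omega
  -- now conclude
  have hR_ne : R.Nonempty := ⟨q ^ (n / 2), by rw [hR]; left; left; rfl⟩
  have hS_ne : S.Nonempty := ⟨_, hg_mem 0 (by omega)⟩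
  apply le_antisymm
  · -- sInf S ≤ sInf R
    obtain ⟨j, hj, hw⟩ := hR_g _ (Nat.sInf_mem hR_ne)
    rw [hw]
    exact Nat.sInf_le (hg_mem j hj)
  · -- sInf R ≤ sInf S
    apply le_csInf hS_ne
    rintro v ⟨x, hx1, hx2, rfl⟩
    obtain ⟨j, hj, hle⟩ := ncard_Ap_ge q hq n hn hx1 hx2
    obtain ⟨w, hwR, hwle⟩ := hg_R j hj
    exact le_trans (Nat.sInf_le hwR) (le_trans hwle hle)
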